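/- arXiv:math/0403448 — 2 statements merged into one kernel-verified Lean document; each statement's English description precedes it below -/
import Mathlib

section
/- Let G be a connected loopless multigraph on a finite vertex set V, with spanning simple graph G̃ = (V, Ẽ) and multiplicity function μ. Then, as Laurent polynomials in ℤ[t,t⁻¹], T_G(−t,−1/t) = Σ_{F̃ ⊆ Ẽ} (−t−1)^{k(F̃)−1} · (−t⁻¹−1)^{|F̃|−|V|+k(F̃)} · Π_{e ∈ F̃} P(μ(e)). -/
open LaurentPolynomial Finset

/-- Number of connected components of the simple graph on `V` with edge set `s`
(isolated vertices count as components). -/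
noncomputable def numComponents (V : Type*) (s : Set (Sym2 V)) : ℕ :=
  Nat.card (SimpleGraph.fromEdgeSet s).ConnectedComponent

/-- The evaluation `T_G(-t, -1/t)` of the Tutte polynomial of the multigraph
given by `ε : E → Sym2 V`, as a Laurent polynomial in `ℤ[t,t⁻¹]`. -/
noncomputable def tutteEval {V E : Type*} [Fintype V] [Fintype E]
    (ε : E → Sym2 V) : LaurentPolynomial ℤ :=
  ∑ F : Finset E,
    (-T 1 - 1) ^ (numComponents V (ε '' ↑F) - numComponents V (Set.range ε)) *
      (-T (-1) - 1) ^ (F.card + numComponents V (ε '' ↑F) - Fintype.card V)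

/-- `P(m) = 1 - t⁻¹ + t⁻² - ⋯ ± t^{-(m-1)}`. -/
noncomputable def Ppoly (m : ℕ) : LaurentPolynomial ℤ :=
  ∑ i ∈ Finset.range m, (-T (-1)) ^ i

section
variable {V E : Type*} [Fintype V] [DecidableEq V] [Fintype E]

/-- The edge set of the spanning simple graph of the multigraph `ε : E → Sym2 V`. -/
noncomputable def spanningEdges (ε : E → Sym2 V) : Finset (Sym2 V) :=
  Finset.image ε Finset.univ

/-- The multiplicity of an edge `e` of the spanning simple graph. -/
noncomputable def edgeMult (ε : E → Sym2 V) (e : Sym2 V) : ℕ :=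
  Nat.card {f : E // ε f = e}

/-- `n(j)`: the number of edges of the spanning simple graph of multiplicity `≥ j`. -/
noncomputable def nMult (ε : E → Sym2 V) (j : ℕ) : ℕ :=
  Nat.card {e : Sym2 V // e ∈ spanningEdges ε ∧ j ≤ edgeMult ε e}

/-- The number of triangles in the spanning simple graph. -/
noncomputable def numTriangles (ε : E → Sym2 V) : ℕ :=
  Nat.card {s : Finset V // s.card = 3 ∧
    ∀ u ∈ s, ∀ v ∈ s, u ≠ v → s(u, v) ∈ spanningEdges ε}
end

section AuxAlgebra

private lemma sum_pow_card' {R : Type*} [CommRing R] {α : Type*} [DecidableEq α] (z : R)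
    (s : Finset α) : ∑ t ∈ s.powerset, z ^ t.card = (z + 1) ^ s.card := by
  have := Finset.prod_add (fun _ : α => z) (fun _ => 1) s
  simp only [prod_const, prod_const_one, mul_one, one_pow] at this
  rw [this]

private lemma sum_powerset_nonempty' {R : Type*} [CommRing R] {α : Type*} [DecidableEq α] (z : R)
    (s : Finset α) :
    ∑ t ∈ s.powerset.filter (fun t => t.Nonempty), z ^ (t.card - 1)
      = ∑ i ∈ Finset.range s.card, (z + 1) ^ i := by
  rw [Finset.sum_filter]
  induction s using Finset.induction_on with
  | empty => simp
  | insert _ _ ha ih =>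
    rename_i a s
    rw [Finset.sum_powerset_insert ha, ih, card_insert_of_notMem ha, Finset.sum_range_succ]
    congr 1
    have : ∀ t ∈ s.powerset,
        (if (insert a t).Nonempty then z ^ ((insert a t).card - 1) else 0) = z ^ t.card := by
      intro t ht
      rw [mem_powerset] at ht
      have hat : a ∉ t := fun h => ha (ht h)
      rw [if_pos (insert_nonempty _ _), card_insert_of_notMem hat]
      simp
    rw [Finset.sum_congr rfl this, sum_pow_card' z s]

private lemma sum_sub_one_card {α : Type*} (s : Finset α) (c : α → ℕ) (hc : ∀ e ∈ s, 1 ≤ c e) :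
    ∑ e ∈ s, (c e - 1) + s.card = ∑ e ∈ s, c e := by
  rw [Finset.card_eq_sum_ones, ← Finset.sum_add_distrib]
  exact Finset.sum_congr rfl fun e he => by have := hc e he; omega

private lemma fiber_sum {E α R : Type*} [Fintype E] [DecidableEq α] [CommRing R]
    (ε : E → α) (B : R) (Fs : Finset α) :
    ∑ F ∈ Finset.univ.filter (fun F : Finset E => F.image ε = Fs), B ^ (F.card - Fs.card)
      = ∏ e ∈ Fs, ∑ t ∈ (Finset.univ.filter fun f => ε f = e).powerset.filter
          (fun t => t.Nonempty), B ^ (t.card - 1) := by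
  classical
  rw [Finset.prod_sum]
  refine Finset.sum_nbij' (fun F => fun e _ => F.filter fun f => ε f = e)
    (fun p => Fs.attach.biUnion fun x => p x.1 x.2) ?_ ?_ ?_ ?_ ?_
  · -- maps into pi
    intro F hF
    rw [Finset.mem_filter] at hF
    rw [Finset.mem_pi]
    intro e he
    rw [Finset.mem_filter, Finset.mem_powerset]
    constructor
    · intro f hf
      rw [Finset.mem_filter] at hf ⊢
      exact ⟨Finset.mem_univ _, hf.2⟩
    · rw [← hF.2] at he
      obtain ⟨f, hf, hfe⟩ := Finset.mem_image.mp he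
      exact ⟨f, Finset.mem_filter.mpr ⟨hf, hfe⟩⟩
  · -- maps back into filter set
    intro p hp
    rw [Finset.mem_pi] at hp
    rw [Finset.mem_filter]
    refine ⟨Finset.mem_univ _, ?_⟩
    ext e'
    rw [Finset.mem_image]
    constructor
    · rintro ⟨f, hf, rfl⟩
      obtain ⟨⟨e, he⟩, -, hfp⟩ := Finset.mem_biUnion.mp hf
      have := hp e he
      rw [Finset.mem_filter, Finset.mem_powerset] at this
      have := this.1 hfp
      rw [Finset.mem_filter] at this
      rw [this.2]; exact he
    · intro he'
      have := hp e' he'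
      rw [Finset.mem_filter, Finset.mem_powerset] at this
      obtain ⟨f, hf⟩ := this.2
      refine ⟨f, Finset.mem_biUnion.mpr ⟨⟨e', he'⟩, Finset.mem_attach _ _, hf⟩, ?_⟩
      have := this.1 hf
      rw [Finset.mem_filter] at this
      exact this.2
  · -- left inverse
    intro F hF
    rw [Finset.mem_filter] at hF
    ext f
    rw [Finset.mem_biUnion]
    constructor
    · rintro ⟨⟨e, he⟩, -, hf⟩
      exact (Finset.mem_filter.mp hf).1
    · intro hf
      have : ε f ∈ Fs := hF.2 ▸ Finset.mem_image_of_mem ε hf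
      exact ⟨⟨ε f, this⟩, Finset.mem_attach _ _, Finset.mem_filter.mpr ⟨hf, rfl⟩⟩
  · -- right inverse
    intro p hp
    rw [Finset.mem_pi] at hp
    funext e he
    ext f
    rw [Finset.mem_filter, Finset.mem_biUnion]
    constructor
    · rintro ⟨⟨⟨e', he'⟩, -, hf⟩, heq⟩
      have := hp e' he'
      rw [Finset.mem_filter, Finset.mem_powerset] at this
      have h2 := this.1 hf
      rw [Finset.mem_filter] at h2
      obtain rfl : e' = e := by rw [← h2.2, heq]
      exact hf
    · intro hf
      refine ⟨⟨⟨e, he⟩, Finset.mem_attach _ _, hf⟩, ?_⟩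
      have := hp e he
      rw [Finset.mem_filter, Finset.mem_powerset] at this
      have h2 := this.1 hf
      rw [Finset.mem_filter] at h2
      exact h2.2
  · -- values agree
    intro F hF
    rw [Finset.mem_filter] at hF
    rw [Finset.prod_pow_eq_pow_sum]
    congr 1
    have hcard : F.card = ∑ e ∈ Fs, (F.filter fun f => ε f = e).card := by
      apply Finset.card_eq_sum_card_fiberwise
      intro f hf
      exact hF.2 ▸ Finset.mem_image_of_mem ε hf
    have hsum : ∑ x ∈ Fs.attach, ((F.filter fun f => ε f = x.1).card - 1)
        = ∑ e ∈ Fs, ((F.filter fun f => ε f = e).card - 1) :=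
      Finset.sum_attach Fs (fun e => (F.filter fun f => ε f = e).card - 1)
    have hone : ∀ e ∈ Fs, 1 ≤ (F.filter fun f => ε f = e).card := by
      intro e he
      rw [← hF.2] at he
      obtain ⟨f, hf, hfe⟩ := Finset.mem_image.mp he
      exact Finset.card_pos.mpr ⟨f, Finset.mem_filter.mpr ⟨hf, hfe⟩⟩
    have := sum_sub_one_card Fs (fun e => (F.filter fun f => ε f = e).card) hone
    rw [hsum]
    beta_reduce at this
    omega

end AuxAlgebra

section AuxGraph

open SimpleGraph

private lemma numComponents_empty (V : Type*) [Fintype V] :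
    numComponents V (∅ : Set (Sym2 V)) = Fintype.card V := by
  unfold numComponents
  rw [fromEdgeSet_empty, ← Nat.card_eq_fintype_card]
  refine (Nat.card_eq_of_bijective (⊥ : SimpleGraph V).connectedComponentMk ⟨?_, ?_⟩).symm
  · intro a b h
    exact (reachable_bot).mp (ConnectedComponent.eq.mp h)
  · exact fun c => c.exists_rep

private lemma reach_insert {V : Type*} {s : Set (Sym2 V)} {u v a b : V}
    (h : (SimpleGraph.fromEdgeSet (insert s(u, v) s)).Reachable a b) :
    (SimpleGraph.fromEdgeSet s).Reachable a b ∨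
      ((SimpleGraph.fromEdgeSet s).Reachable a u ∧ (SimpleGraph.fromEdgeSet s).Reachable b v) ∨
      ((SimpleGraph.fromEdgeSet s).Reachable a v ∧ (SimpleGraph.fromEdgeSet s).Reachable b u) := by
  set G := SimpleGraph.fromEdgeSet s with hG
  obtain ⟨w⟩ := h
  induction w with
  | nil => exact Or.inl (Reachable.refl _)
  | @cons x y z h p ih =>
    rw [fromEdgeSet_adj, Set.mem_insert_iff] at h
    obtain ⟨h1 | h1, hne⟩ := h
    · rw [Sym2.eq_iff] at h1
      obtain ⟨rfl, rfl⟩ | ⟨rfl, rfl⟩ := h1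
      · rcases ih with hr | ⟨h2, h3⟩ | ⟨h2, h3⟩
        · exact Or.inr (Or.inl ⟨Reachable.refl _, hr.symm⟩)
        · exact Or.inl (h2.symm.trans h3.symm)
        · exact Or.inl h3.symm
      · rcases ih with hr | ⟨h2, h3⟩ | ⟨h2, h3⟩
        · exact Or.inr (Or.inr ⟨Reachable.refl _, hr.symm⟩)
        · exact Or.inl h3.symm
        · exact Or.inl (h2.symm.trans h3.symm)
    · have hxy : G.Reachable x y := (Adj.reachable (by rw [hG, fromEdgeSet_adj]; exact ⟨h1, hne⟩))
      rcases ih with hr | ⟨h2, h3⟩ | ⟨h2, h3⟩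
      · exact Or.inl (hxy.trans hr)
      · exact Or.inr (Or.inl ⟨hxy.trans h2, h3⟩)
      · exact Or.inr (Or.inr ⟨hxy.trans h2, h3⟩)

private lemma card_le_of_injOn_compl {α β : Type*} [Finite α] [Finite β] (f : α → β) (x : α)
    (h : Set.InjOn f ({x}ᶜ)) : Nat.card α ≤ Nat.card β + 1 := by
  have h1 := Set.ncard_add_ncard_compl ({x} : Set α) (Set.toFinite _) (Set.toFinite _)
  have h2 : (({x} : Set α)ᶜ).ncard = (f '' ({x} : Set α)ᶜ).ncard :=
    (Set.ncard_image_of_injOn h).symm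
  have h3 : (f '' ({x} : Set α)ᶜ).ncard ≤ Nat.card β := by
    rw [← Set.ncard_univ]; exact Set.ncard_le_ncard (Set.subset_univ _) (Set.toFinite _)
  have h4 : ({x} : Set α).ncard = 1 := Set.ncard_singleton x
  omega

private lemma numComponents_le_insert {V : Type*} [Fintype V] (s : Set (Sym2 V)) (e : Sym2 V) :
    numComponents V s ≤ numComponents V (insert e s) + 1 := by
  induction e using Sym2.ind with
  | _ u v =>
    set G := SimpleGraph.fromEdgeSet s with hG
    set G' := SimpleGraph.fromEdgeSet (insert s(u, v) s) with hG'
    have hle : G ≤ G' := SimpleGraph.fromEdgeSet_mono (Set.subset_insert _ _)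
    apply card_le_of_injOn_compl
      (ConnectedComponent.map (SimpleGraph.Hom.ofLE hle))
      (G.connectedComponentMk u)
    intro c1 hc1 c2 hc2 hf
    induction c1, c2 using SimpleGraph.ConnectedComponent.ind₂ with
    | _ a b =>
      simp only [ConnectedComponent.map_mk, SimpleGraph.Hom.ofLE_apply] at hf
      rw [ConnectedComponent.eq] at hf
      rcases reach_insert hf with hr | ⟨h2, _⟩ | ⟨_, h3⟩
      · exact ConnectedComponent.sound hr
      · exact absurd (ConnectedComponent.sound h2) hc1
      · exact absurd (ConnectedComponent.sound h3) hc2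

private lemma card_le_card_add_numComponents {V : Type*} [Fintype V]
    (Fs : Finset (Sym2 V)) :
    Fintype.card V ≤ Fs.card + numComponents V ↑Fs := by
  classical
  induction Fs using Finset.induction_on with
  | empty => rw [Finset.coe_empty, numComponents_empty, Finset.card_empty, Nat.zero_add]
  | insert _ _ ha ih =>
    rename_i e Fs
    have h1 := numComponents_le_insert (↑Fs : Set (Sym2 V)) e
    rw [card_insert_of_notMem ha, coe_insert]
    omega

end AuxGraph

/-- For a connected loopless multigraph `ε : E → Sym2 V`, the Tutte
evaluation `T_G(-t,-1/t)` equals the weighted sum over subsets of the spanning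
simple graph's edge set. -/
theorem tutteEval_eq_sum_spanning {V E : Type*} [Fintype V] [DecidableEq V] [Fintype E]
    (ε : E → Sym2 V)
    (hloopless : ∀ f : E, ¬ (ε f).IsDiag)
    (hconn : numComponents V (Set.range ε) = 1) :
    tutteEval ε =
      ∑ Fs ∈ (spanningEdges ε).powerset,
        (-T 1 - 1) ^ (numComponents V (↑Fs : Set (Sym2 V)) - 1) *
          (-T (-1) - 1) ^ (Fs.card + numComponents V (↑Fs : Set (Sym2 V)) - Fintype.card V) *
          ∏ e ∈ Fs, Ppoly (edgeMult ε e) := by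
  classical
  have hmaps : ∀ F ∈ (Finset.univ : Finset (Finset E)),
      F.image ε ∈ (spanningEdges ε).powerset := by
    intro F _
    rw [Finset.mem_powerset]
    intro e he
    obtain ⟨f, _, rfl⟩ := Finset.mem_image.mp he
    exact Finset.mem_image_of_mem ε (Finset.mem_univ f)
  unfold tutteEval
  rw [← Finset.sum_fiberwise_of_maps_to hmaps]
  refine Finset.sum_congr rfl fun Fs hFs => ?_
  have hn : Fintype.card V ≤ Fs.card + numComponents V (↑Fs : Set (Sym2 V)) :=
    card_le_card_add_numComponents Fs
  have step1 : ∀ F ∈ Finset.univ.filter (fun F : Finset E => F.image ε = Fs),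
      (-T 1 - 1 : LaurentPolynomial ℤ) ^
          (numComponents V (ε '' ↑F) - numComponents V (Set.range ε)) *
        (-T (-1) - 1) ^ (F.card + numComponents V (ε '' ↑F) - Fintype.card V)
      = ((-T 1 - 1) ^ (numComponents V (↑Fs : Set (Sym2 V)) - 1) *
          (-T (-1) - 1) ^ (Fs.card + numComponents V (↑Fs : Set (Sym2 V)) - Fintype.card V)) *
          (-T (-1) - 1) ^ (F.card - Fs.card) := by
    intro F hF
    rw [Finset.mem_filter] at hF
    have himg : ε '' (↑F : Set E) = (↑Fs : Set (Sym2 V)) := by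
      rw [← Finset.coe_image, hF.2]
    have hcard : Fs.card ≤ F.card := hF.2 ▸ Finset.card_image_le
    rw [himg, hconn]
    have hexp : F.card + numComponents V (↑Fs : Set (Sym2 V)) - Fintype.card V
        = (Fs.card + numComponents V (↑Fs : Set (Sym2 V)) - Fintype.card V)
          + (F.card - Fs.card) := by omega
    rw [hexp, pow_add, mul_assoc]
  have hstep : ∑ F ∈ Finset.univ.filter (fun F : Finset E => F.image ε = Fs),
      (-T 1 - 1 : LaurentPolynomial ℤ) ^
          (numComponents V (ε '' ↑F) - numComponents V (Set.range ε)) *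
        (-T (-1) - 1) ^ (F.card + numComponents V (ε '' ↑F) - Fintype.card V)
      = ∑ F ∈ Finset.univ.filter (fun F : Finset E => F.image ε = Fs),
        ((-T 1 - 1) ^ (numComponents V (↑Fs : Set (Sym2 V)) - 1) *
          (-T (-1) - 1) ^ (Fs.card + numComponents V (↑Fs : Set (Sym2 V)) - Fintype.card V)) *
          (-T (-1) - 1) ^ (F.card - Fs.card) :=
    Finset.sum_congr rfl step1
  rw [hstep]
  rw [← Finset.mul_sum]
  rw [fiber_sum ε (-T (-1) - 1 : LaurentPolynomial ℤ) Fs]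
  congr 1
  refine Finset.prod_congr rfl fun e he => ?_
  have hm : edgeMult ε e = (Finset.univ.filter fun f => ε f = e).card := by
    rw [edgeMult, Nat.card_eq_fintype_card, Fintype.card_subtype]
  have hB : (-T (-1) - 1 : LaurentPolynomial ℤ) + 1 = -T (-1) := by ring
  rw [sum_powerset_nonempty', hB, Ppoly, hm]
end

section
/- Let V be a finite vertex set and let F̃ be a finite set of non-diagonal elements of Sym2(V) (i.e. a set of edges of a simple graph on V). Then k(F̃) = |V| − 2 if and only if either |F̃| = 2, or |F̃| = 3 and the three edges of F̃ form a triangle (i.e. there are three distinct vertices u, v, w with F̃ = {{u,v}, {v,w}, {u,w}}). -/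
open Finset

namespace Stmt8

open SimpleGraph

variable {V : Type*}

lemma reach_mono' {G G' : SimpleGraph V}
    (h2 : ∀ a b, G'.Adj a b → G.Reachable a b) {a b : V} (h : G'.Reachable a b) :
    G.Reachable a b := by
  obtain ⟨w⟩ := h
  induction w with
  | nil => exact Reachable.refl _
  | cons h p ih => exact (h2 _ _ h).trans ih

lemma reach_decomp {G G' : SimpleGraph V} {x y : V}
    (h2 : ∀ a b, G'.Adj a b → G.Adj a b ∨ s(a, b) = s(x, y))
    (hnr : ¬ G.Reachable x y) {a b : V} (h : G'.Reachable a b) :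
    G.Reachable a b ∨ (G.Reachable a x ∧ G.Reachable y b) ∨
      (G.Reachable a y ∧ G.Reachable x b) := by
  obtain ⟨w⟩ := h
  induction w with
  | nil => exact Or.inl (Reachable.refl _)
  | @cons u c b h p ih =>
    rcases h2 _ _ h with hadj | heq
    · rcases ih with r | ⟨r1, r2⟩ | ⟨r1, r2⟩
      · exact Or.inl (hadj.reachable.trans r)
      · exact Or.inr (Or.inl ⟨hadj.reachable.trans r1, r2⟩)
      · exact Or.inr (Or.inr ⟨hadj.reachable.trans r1, r2⟩)
    · rw [Sym2.eq_iff] at heq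
      rcases heq with ⟨rfl, rfl⟩ | ⟨rfl, rfl⟩
      · rcases ih with r | ⟨r1, r2⟩ | ⟨r1, r2⟩
        · exact Or.inr (Or.inl ⟨Reachable.refl _, r⟩)
        · exact absurd r1.symm hnr
        · exact Or.inl r2
      · rcases ih with r | ⟨r1, r2⟩ | ⟨r1, r2⟩
        · exact Or.inr (Or.inr ⟨Reachable.refl _, r⟩)
        · exact Or.inl r2
        · exact absurd r1 hnr

lemma card_cc_eq_of_reach {G G' : SimpleGraph V} (hle : G ≤ G')
    (h2 : ∀ a b, G'.Adj a b → G.Reachable a b) :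
    Nat.card G'.ConnectedComponent = Nat.card G.ConnectedComponent := by
  have key : ∀ a b : V, G'.Reachable a b → G.Reachable a b := fun a b h => reach_mono' h2 h
  refine (Nat.card_eq_of_bijective
    (SimpleGraph.ConnectedComponent.map (SimpleGraph.Hom.ofLE hle)) ⟨?_, ?_⟩).symm
  · refine SimpleGraph.ConnectedComponent.ind₂ (fun a b h => ?_)
    simp only [ConnectedComponent.map_mk, Hom.ofLE_apply,
      ConnectedComponent.eq] at h ⊢
    exact key a b h
  · refine SimpleGraph.ConnectedComponent.ind (fun v => ⟨G.connectedComponentMk v, ?_⟩)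
    simp [ConnectedComponent.map_mk]

lemma card_cc_insert [Finite V] {G G' : SimpleGraph V} {x y : V} (hle : G ≤ G')
    (hadj : G'.Adj x y)
    (h2 : ∀ a b, G'.Adj a b → G.Adj a b ∨ s(a, b) = s(x, y))
    (hnr : ¬ G.Reachable x y) :
    Nat.card G'.ConnectedComponent + 1 = Nat.card G.ConnectedComponent := by
  classical
  set φ : G.ConnectedComponent → G'.ConnectedComponent :=
    SimpleGraph.ConnectedComponent.map (SimpleGraph.Hom.ofLE hle) with hφ
  have hφmk : ∀ v : V, φ (G.connectedComponentMk v) = G'.connectedComponentMk v := fun v => rfl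
  set cx := G.connectedComponentMk x
  set cy := G.connectedComponentMk y
  have hxy : cx ≠ cy := fun h => hnr ((SimpleGraph.ConnectedComponent.eq).mp h)
  have hφxy : φ cx = φ cy := by
    rw [hφmk, hφmk, ConnectedComponent.eq]
    exact hadj.reachable
  have hinj : ∀ c d : G.ConnectedComponent, φ c = φ d →
      c = d ∨ (c = cx ∧ d = cy) ∨ (c = cy ∧ d = cx) := by
    refine SimpleGraph.ConnectedComponent.ind₂ (fun a b h => ?_)
    rw [hφmk, hφmk, ConnectedComponent.eq] at h
    rcases reach_decomp h2 hnr h with r | ⟨r1, r2⟩ | ⟨r1, r2⟩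
    · exact Or.inl (ConnectedComponent.sound r)
    · exact Or.inr (Or.inl ⟨ConnectedComponent.sound r1, (ConnectedComponent.sound r2).symm⟩)
    · exact Or.inr (Or.inr ⟨ConnectedComponent.sound r1, (ConnectedComponent.sound r2).symm⟩)
  have hsurj : Function.Surjective φ := by
    refine SimpleGraph.ConnectedComponent.ind (fun v => ⟨G.connectedComponentMk v, rfl⟩)
  -- bijection between {c // c ≠ cy} and G'.ConnectedComponent
  have hbij : Function.Bijective (fun c : {c : G.ConnectedComponent // c ≠ cy} => φ c.1) := by
    constructor
    · rintro ⟨c, hc⟩ ⟨d, hd⟩ h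
      rcases hinj c d h with h | ⟨h1, h2⟩ | ⟨h1, h2⟩
      · exact Subtype.ext h
      · exact absurd h2 hd
      · exact absurd h1 hc
    · intro c'
      obtain ⟨d, rfl⟩ := hsurj c'
      by_cases hd : d = cy
      · exact ⟨⟨cx, hxy⟩, by simp only []; rw [hφxy, hd]⟩
      · exact ⟨⟨d, hd⟩, rfl⟩
  have := Fintype.ofFinite V
  have : Fintype G.ConnectedComponent := Fintype.ofFinite _
  rw [← Nat.card_eq_of_bijective _ hbij]
  rw [Nat.card_eq_fintype_card, Nat.card_eq_fintype_card]
  have h1 : Fintype.card {c : G.ConnectedComponent // c ≠ cy} =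
      Fintype.card G.ConnectedComponent - 1 := by
    have := Fintype.card_subtype_compl (fun c : G.ConnectedComponent => c = cy)
    simp only [Fintype.card_subtype_eq] at this
    convert this using 2
  rw [h1]
  have : 0 < Fintype.card G.ConnectedComponent := Fintype.card_pos_iff.mpr ⟨cy⟩
  omega

lemma reach_bot {a b : V} (h : (⊥ : SimpleGraph V).Reachable a b) : a = b := by
  obtain ⟨w⟩ := h
  cases w with
  | nil => rfl
  | cons h _ => exact absurd h (by simp)

lemma card_cc_bot [Fintype V] :
    Nat.card (⊥ : SimpleGraph V).ConnectedComponent = Fintype.card V := by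
  rw [← Nat.card_eq_fintype_card]
  refine (Nat.card_eq_of_bijective (⊥ : SimpleGraph V).connectedComponentMk ⟨?_, ?_⟩).symm
  · intro a b h
    exact reach_bot (SimpleGraph.ConnectedComponent.eq.mp h)
  · exact SimpleGraph.ConnectedComponent.ind (fun v => ⟨v, rfl⟩)

lemma reach_single {c d : V} (hcd : c ≠ d) {a b : V}
    (h : (SimpleGraph.fromEdgeSet {s(c, d)}).Reachable a b) :
    a = b ∨ s(a, b) = s(c, d) := by
  have hnr : ¬ (⊥ : SimpleGraph V).Reachable c d := fun h => hcd (reach_bot h)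
  have h2 : ∀ p q : V, (SimpleGraph.fromEdgeSet {s(c, d)}).Adj p q →
      (⊥ : SimpleGraph V).Adj p q ∨ s(p, q) = s(c, d) := by
    intro p q hpq
    rw [SimpleGraph.fromEdgeSet_adj] at hpq
    exact Or.inr (by simpa using hpq.1)
  rcases reach_decomp h2 hnr h with r | ⟨r1, r2⟩ | ⟨r1, r2⟩
  · exact Or.inl (reach_bot r)
  · obtain rfl := reach_bot r1; obtain rfl := reach_bot r2; exact Or.inr rfl
  · obtain rfl := reach_bot r1; obtain rfl := reach_bot r2
    exact Or.inr (Sym2.eq_swap)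

lemma reach_eq_of_isolated {G : SimpleGraph V} {a : V} (h : ∀ b, ¬ G.Adj a b) {b : V}
    (hr : G.Reachable a b) : a = b := by
  obtain ⟨w⟩ := hr
  cases w with
  | nil => rfl
  | cons h' _ => exact absurd h' (h _)

lemma reach_tri {u v w : V} (huv : u ≠ v) (hvw : v ≠ w) (huw : u ≠ w) {x y : V} (hxy : x ≠ y)
    (h : (SimpleGraph.fromEdgeSet {s(u, v), s(v, w), s(u, w)}).Reachable x y) :
    s(x, y) = s(u, v) ∨ s(x, y) = s(v, w) ∨ s(x, y) = s(u, w) := by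
  set G := SimpleGraph.fromEdgeSet {s(u, v), s(v, w), s(u, w)} with hG
  have hmem : ∀ z : V, (∃ b, G.Adj z b) → z = u ∨ z = v ∨ z = w := by
    rintro z ⟨b, hb⟩
    rw [hG, SimpleGraph.fromEdgeSet_adj] at hb
    have := hb.1
    simp only [Set.mem_insert_iff, Set.mem_singleton_iff] at this
    rcases this with h' | h' | h' <;> rw [Sym2.eq_iff] at h' <;> tauto
  have hx : x = u ∨ x = v ∨ x = w := by
    by_contra hc
    exact hxy (reach_eq_of_isolated (fun b hb => hc (hmem x ⟨b, hb⟩)) h)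
  have hy : y = u ∨ y = v ∨ y = w := by
    by_contra hc
    exact hxy.symm (reach_eq_of_isolated (fun b hb => hc (hmem y ⟨b, hb⟩)) h.symm)
  rcases hx with rfl | rfl | rfl <;> rcases hy with rfl | rfl | rfl <;>
    simp_all [Sym2.eq_iff]

lemma lemma_zero [Fintype V] (Fs : Finset (Sym2 V)) (hnd : ∀ e ∈ Fs, ¬ e.IsDiag)
    (h : Nat.card (SimpleGraph.fromEdgeSet (↑Fs : Set (Sym2 V))).ConnectedComponent
      = Fintype.card V) : Fs = ∅ := by
  set G := SimpleGraph.fromEdgeSet (↑Fs : Set (Sym2 V)) with hG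
  by_contra hne
  obtain ⟨e, he⟩ := Finset.nonempty_of_ne_empty hne
  induction e using Sym2.ind with
  | _ a b =>
  have hab : a ≠ b := fun h' => hnd _ he (by simp [h'])
  have hadj : G.Adj a b := by rw [hG, SimpleGraph.fromEdgeSet_adj]; exact ⟨by simpa using he, hab⟩
  have hsurj : Function.Surjective G.connectedComponentMk :=
    SimpleGraph.ConnectedComponent.ind (fun v => ⟨v, rfl⟩)
  have hbij : Function.Bijective G.connectedComponentMk := by
    rw [Nat.bijective_iff_surjective_and_card]
    exact ⟨hsurj, by rw [h, Nat.card_eq_fintype_card]⟩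
  exact hab (hbij.1 (SimpleGraph.ConnectedComponent.sound hadj.reachable))

open SimpleGraph in
lemma cc_insert_of_reach [DecidableEq V] (F' : Finset (Sym2 V)) {x y : V}
    (hr : (fromEdgeSet (↑F' : Set (Sym2 V))).Reachable x y) :
    Nat.card (fromEdgeSet (↑(insert s(x, y) F') : Set (Sym2 V))).ConnectedComponent =
      Nat.card (fromEdgeSet (↑F' : Set (Sym2 V))).ConnectedComponent := by
  refine card_cc_eq_of_reach (fromEdgeSet_mono (by simp)) (fun a b hab => ?_)
  rw [fromEdgeSet_adj, Finset.coe_insert, Set.mem_insert_iff] at hab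
  rcases hab.1 with h' | h'
  · rw [Sym2.eq_iff] at h'
    rcases h' with ⟨rfl, rfl⟩ | ⟨rfl, rfl⟩
    · exact hr
    · exact hr.symm
  · exact ((SimpleGraph.fromEdgeSet_adj _).mpr ⟨h', hab.2⟩).reachable

open SimpleGraph in
lemma cc_insert_of_not_reach [Fintype V] [DecidableEq V] (F' : Finset (Sym2 V)) {x y : V} (hxy : x ≠ y)
    (hnr : ¬ (fromEdgeSet (↑F' : Set (Sym2 V))).Reachable x y) :
    Nat.card (fromEdgeSet (↑(insert s(x, y) F') : Set (Sym2 V))).ConnectedComponent + 1 =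
      Nat.card (fromEdgeSet (↑F' : Set (Sym2 V))).ConnectedComponent := by
  refine card_cc_insert (fromEdgeSet_mono (by simp)) ?_ (fun a b hab => ?_) hnr
  · exact (fromEdgeSet_adj _).mpr ⟨by simp, hxy⟩
  · rw [fromEdgeSet_adj, Finset.coe_insert, Set.mem_insert_iff] at hab
    rcases hab.1 with h' | h'
    · exact Or.inr h'
    · exact Or.inl ((SimpleGraph.fromEdgeSet_adj _).mpr ⟨h', hab.2⟩)

lemma lemma_one [Fintype V] [DecidableEq V] (Fs : Finset (Sym2 V)) (hnd : ∀ e ∈ Fs, ¬ e.IsDiag)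
    (h : Nat.card (SimpleGraph.fromEdgeSet (↑Fs : Set (Sym2 V))).ConnectedComponent + 1
      = Fintype.card V) : ∃ a b : V, a ≠ b ∧ Fs = {s(a, b)} := by
  induction Fs using Finset.induction_on with
  | empty =>
    rw [show ((↑(∅ : Finset (Sym2 V)) : Set (Sym2 V))) = ∅ by simp,
      SimpleGraph.fromEdgeSet_empty, card_cc_bot] at h
    omega
  | @insert e F' hnotmem ih =>
    induction e using Sym2.ind with
    | _ x y =>
    have hxy : x ≠ y := fun h' => hnd _ (Finset.mem_insert_self _ _) (by simp [h'])
    by_cases hr : (SimpleGraph.fromEdgeSet (↑F' : Set (Sym2 V))).Reachable x y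
    · rw [cc_insert_of_reach F' hr] at h
      obtain ⟨a, b, hab, rfl⟩ := ih (fun e he => hnd _ (Finset.mem_insert_of_mem he)) h
      rcases reach_single hab (by simpa using hr) with rfl | heq
      · exact absurd rfl hxy
      · exact absurd (by simp [heq]) hnotmem
    · have := cc_insert_of_not_reach F' hxy hr
      have hF' : F' = ∅ :=
        lemma_zero F' (fun e he => hnd _ (Finset.mem_insert_of_mem he)) (by omega)
      exact ⟨x, y, hxy, by simp [hF']⟩

lemma tri_close [DecidableEq V] {x y m : V} (hxy : x ≠ y) (hxm : x ≠ m) (hym : y ≠ m)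
    {e1 e2 : Sym2 V} (h12 : ({e1, e2} : Finset (Sym2 V)) = {s(x, m), s(y, m)}) :
    ∃ u v w : V, u ≠ v ∧ v ≠ w ∧ u ≠ w ∧
      insert s(x, y) ({e1, e2} : Finset (Sym2 V)) =
        ({s(u, v), s(v, w), s(u, w)} : Finset (Sym2 V)) := by
  refine ⟨x, y, m, hxy, hym, hxm, ?_⟩
  rw [h12]
  ext z
  simp only [Finset.mem_insert, Finset.mem_singleton]
  tauto

lemma pair_close [DecidableEq V] {p q r t : Sym2 V} (h1 : p = r ∨ p = t) (h2 : q = r ∨ q = t)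
    (hpq : p ≠ q) : ({p, q} : Finset (Sym2 V)) = {r, t} := by
  rcases h1 with rfl | rfl <;> rcases h2 with rfl | rfl
  · exact absurd rfl hpq
  · rfl
  · exact Finset.pair_comm _ _
  · exact absurd rfl hpq

lemma aux2 [DecidableEq V] {a b c d x y : V} (hab : a ≠ b) (hcd : c ≠ d) (hxy : x ≠ y)
    (hm1 : s(x, y) ≠ s(a, b)) (hm2 : s(x, y) ≠ s(c, d)) (hne : s(a, b) ≠ s(c, d))
    (h1 : x = c ∨ s(x, c) = s(a, b)) (h2 : d = y ∨ s(d, y) = s(a, b)) :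
    ∃ u v w : V, u ≠ v ∧ v ≠ w ∧ u ≠ w ∧
      insert s(x, y) ({s(a, b), s(c, d)} : Finset (Sym2 V)) =
        ({s(u, v), s(v, w), s(u, w)} : Finset (Sym2 V)) := by
  rcases h1 with hx | hx
  · rcases h2 with hy | hy
    · exact absurd (by rw [hx, ← hy]) hm2
    · rw [Sym2.eq_iff] at hy
      rcases hy with ⟨hd, hy⟩ | ⟨hd, hy⟩
      · -- x = c, d = a, y = b : triangle (x, y, a)
        refine tri_close (m := a) hxy (by rw [hx, ← hd]; exact hcd)
          (by rw [hy]; exact hab.symm) ?_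
        refine pair_close ?_ ?_ hne
        · exact Or.inr (by rw [hy, Sym2.eq_swap])
        · exact Or.inl (by rw [hx, hd])
      · -- x = c, d = b, y = a : triangle (x, y, b)
        refine tri_close (m := b) hxy (by rw [hx, ← hd]; exact hcd) (by rw [hy]; exact hab) ?_
        refine pair_close ?_ ?_ hne
        · exact Or.inr (by rw [hy])
        · exact Or.inl (by rw [hx, hd])
  · rw [Sym2.eq_iff] at hx
    rcases h2 with hy | hy
    · rcases hx with ⟨hx, hc⟩ | ⟨hx, hc⟩
      · -- x = a, c = b, y = d : triangle (x, y, b)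
        refine tri_close (m := b) hxy (by rw [hx]; exact hab)
          (by rw [← hy, ← hc]; exact hcd.symm) ?_
        refine pair_close ?_ ?_ hne
        · exact Or.inl (by rw [hx])
        · exact Or.inr (by rw [hc, ← hy, Sym2.eq_swap])
      · -- x = b, c = a, y = d : triangle (x, y, a)
        refine tri_close (m := a) hxy (by rw [hx]; exact hab.symm)
          (by rw [← hy, ← hc]; exact hcd.symm) ?_
        refine pair_close ?_ ?_ hne
        · exact Or.inl (by rw [hx, Sym2.eq_swap])
        · exact Or.inr (by rw [hc, ← hy, Sym2.eq_swap])
    · rw [Sym2.eq_iff] at hy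
      rcases hx with ⟨hx, hc⟩ | ⟨hx, hc⟩ <;> rcases hy with ⟨hd, hy⟩ | ⟨hd, hy⟩
      · exact absurd (by rw [hx, hy]) hm1
      · exact absurd (by rw [hc, hd] : c = d) hcd
      · exact absurd (by rw [hc, hd] : c = d) hcd
      · exact absurd (by rw [hx, hy, Sym2.eq_swap]) hm1

open SimpleGraph in
lemma lemma_two [Fintype V] [DecidableEq V] (Fs : Finset (Sym2 V))
    (hnd : ∀ e ∈ Fs, ¬ e.IsDiag)
    (h : Nat.card (fromEdgeSet (↑Fs : Set (Sym2 V))).ConnectedComponent + 2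
      = Fintype.card V) :
    Fs.card = 2 ∨ (Fs.card = 3 ∧ ∃ u v w : V, u ≠ v ∧ v ≠ w ∧ u ≠ w ∧
      Fs = {s(u, v), s(v, w), s(u, w)}) := by
  induction Fs using Finset.induction_on with
  | empty =>
    rw [show ((↑(∅ : Finset (Sym2 V)) : Set (Sym2 V))) = ∅ by simp,
      SimpleGraph.fromEdgeSet_empty, card_cc_bot] at h
    omega
  | @insert e F' hnotmem ih =>
    induction e using Sym2.ind with
    | _ x y =>
    have hxy : x ≠ y := fun h' => hnd _ (Finset.mem_insert_self _ _) (by simp [h'])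
    have hnd' : ∀ e ∈ F', ¬ e.IsDiag := fun e he => hnd _ (Finset.mem_insert_of_mem he)
    by_cases hr : (SimpleGraph.fromEdgeSet (↑F' : Set (Sym2 V))).Reachable x y
    · rw [cc_insert_of_reach F' hr] at h
      rcases ih hnd' h with h2 | ⟨h3, u, v, w, huv, hvw, huw, hF'⟩
      · -- F' has two edges, x--y reachable in F'
        obtain ⟨e1, e2, hne, rfl⟩ := Finset.card_eq_two.mp h2
        obtain ⟨a, b, rfl⟩ : ∃ a b, e1 = s(a, b) := by
          induction e1 using Sym2.ind with | _ a b => exact ⟨a, b, rfl⟩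
        obtain ⟨c, d, rfl⟩ : ∃ c d, e2 = s(c, d) := by
          induction e2 using Sym2.ind with | _ c d => exact ⟨c, d, rfl⟩
        have hab : a ≠ b := fun h' => hnd' s(a, b) (by simp) (by simp [h'])
        have hcd : c ≠ d := fun h' => hnd' s(c, d) (by simp) (by simp [h'])
        have hm1 : s(x, y) ≠ s(a, b) := fun h' => hnotmem (by simp [h'])
        have hm2 : s(x, y) ≠ s(c, d) := fun h' => hnotmem (by simp [h'])
        have hr' : (fromEdgeSet {s(a, b), s(c, d)} : SimpleGraph V).Reachable x y := by
          simpa using hr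
        have hnr0 : ¬ (fromEdgeSet {s(a, b)} : SimpleGraph V).Reachable c d := by
          intro hh
          rcases reach_single hab hh with rfl | heq
          · exact hcd rfl
          · exact hne heq.symm
        have hadj2 : ∀ p q : V, (fromEdgeSet {s(a, b), s(c, d)} : SimpleGraph V).Adj p q →
            (fromEdgeSet {s(a, b)} : SimpleGraph V).Adj p q ∨ s(p, q) = s(c, d) := by
          intro p q hpq
          rw [fromEdgeSet_adj] at hpq
          rcases hpq.1 with h' | h'
          · exact Or.inl ((fromEdgeSet_adj _).mpr ⟨h', hpq.2⟩)
          · exact Or.inr (by simpa using h')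
        have hcard3 : (insert s(x, y) {s(a, b), s(c, d)} : Finset (Sym2 V)).card = 3 := by
          rw [Finset.card_insert_of_notMem hnotmem, h2]
        rcases reach_decomp hadj2 hnr0 hr' with r | ⟨r1, r2⟩ | ⟨r1, r2⟩
        · rcases reach_single hab r with rfl | heq
          · exact absurd rfl hxy
          · exact absurd heq hm1
        · obtain ⟨u, v, w, huv, hvw, huw, heq⟩ :=
            aux2 hab hcd hxy hm1 hm2 hne (reach_single hab r1) (reach_single hab r2)
          exact Or.inr ⟨hcard3, u, v, w, huv, hvw, huw, heq⟩
        · have hswap : s(d, c) = s(c, d) := Sym2.eq_swap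
          obtain ⟨u, v, w, huv, hvw, huw, heq⟩ :=
            aux2 hab hcd.symm hxy hm1 (by rw [hswap]; exact hm2) (by rw [hswap]; exact hne)
              (reach_single hab r1) (reach_single hab r2)
          rw [hswap] at heq
          exact Or.inr ⟨hcard3, u, v, w, huv, hvw, huw, heq⟩
      · -- F' is a triangle, x--y reachable in F' : contradiction
        exfalso
        rw [hF'] at hr
        have hr' : (fromEdgeSet {s(u, v), s(v, w), s(u, w)} : SimpleGraph V).Reachable x y := by
          simpa using hr
        rcases reach_tri huv hvw huw hxy hr' with heq | heq | heq <;>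
          exact hnotmem (by rw [hF', heq]; simp)
    · have hstep := cc_insert_of_not_reach F' hxy hr
      obtain ⟨a, b, hab, rfl⟩ := lemma_one F' hnd' (by omega)
      left
      rw [Finset.card_insert_of_notMem hnotmem, Finset.card_singleton]

open SimpleGraph in
lemma card_cc_single [Fintype V] [DecidableEq V] {c d : V} (hcd : c ≠ d) :
    Nat.card (fromEdgeSet (↑({s(c, d)} : Finset (Sym2 V)) : Set (Sym2 V))).ConnectedComponent
      + 1 = Fintype.card V := by
  have hnr : ¬ (fromEdgeSet (↑(∅ : Finset (Sym2 V)) : Set (Sym2 V))).Reachable c d := by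
    intro hh
    rw [show ((↑(∅ : Finset (Sym2 V)) : Set (Sym2 V))) = ∅ by simp,
      SimpleGraph.fromEdgeSet_empty] at hh
    exact hcd (reach_bot hh)
  have := cc_insert_of_not_reach (∅ : Finset (Sym2 V)) hcd hnr
  rw [show (insert s(c, d) (∅ : Finset (Sym2 V))) = {s(c, d)} from rfl] at this
  rw [this, show ((↑(∅ : Finset (Sym2 V)) : Set (Sym2 V))) = ∅ by simp,
    SimpleGraph.fromEdgeSet_empty, card_cc_bot]

open SimpleGraph in
lemma card_cc_pair [Fintype V] [DecidableEq V] {a b c d : V} (hab : a ≠ b) (hcd : c ≠ d)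
    (hne : s(a, b) ≠ s(c, d)) :
    Nat.card
      (fromEdgeSet (↑({s(a, b), s(c, d)} : Finset (Sym2 V)) : Set (Sym2 V))).ConnectedComponent
      + 2 = Fintype.card V := by
  have hnr : ¬ (fromEdgeSet (↑({s(c, d)} : Finset (Sym2 V)) : Set (Sym2 V))).Reachable a b := by
    intro hh
    rcases reach_single hcd (by simpa using hh) with rfl | heq
    · exact hab rfl
    · exact hne heq
  have h2 := cc_insert_of_not_reach ({s(c, d)} : Finset (Sym2 V)) hab hnr
  have h1 := card_cc_single (V := V) hcd
  rw [show (insert s(a, b) ({s(c, d)} : Finset (Sym2 V))) = {s(a, b), s(c, d)} from rfl] at h2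
  omega

open SimpleGraph in
theorem final_helper {V : Type*} [Fintype V] [DecidableEq V]
    (Fs : Finset (Sym2 V))
    (hnd : ∀ e ∈ Fs, ¬ e.IsDiag) :
    (Nat.card (SimpleGraph.fromEdgeSet (↑Fs : Set (Sym2 V))).ConnectedComponent : ℤ)
        = (Fintype.card V : ℤ) - 2 ↔
      (Fs.card = 2 ∨
        (Fs.card = 3 ∧ ∃ u v w : V, u ≠ v ∧ v ≠ w ∧ u ≠ w ∧
          Fs = {s(u, v), s(v, w), s(u, w)})) := by
  constructor
  · intro h
    exact lemma_two Fs hnd (by omega)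
  · rintro (h2 | ⟨h3, u, v, w, huv, hvw, huw, rfl⟩)
    · obtain ⟨e1, e2, hne, rfl⟩ := Finset.card_eq_two.mp h2
      obtain ⟨a, b, rfl⟩ : ∃ a b, e1 = s(a, b) := by
        induction e1 using Sym2.ind with | _ a b => exact ⟨a, b, rfl⟩
      obtain ⟨c, d, rfl⟩ : ∃ c d, e2 = s(c, d) := by
        induction e2 using Sym2.ind with | _ c d => exact ⟨c, d, rfl⟩
      have hab : a ≠ b := fun h' => hnd s(a, b) (by simp) (by simp [h'])
      have hcd : c ≠ d := fun h' => hnd s(c, d) (by simp) (by simp [h'])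
      have := card_cc_pair hab hcd hne
      omega
    · have hne1 : s(v, w) ≠ s(u, w) := by
        intro heq
        rw [Sym2.eq_iff] at heq
        rcases heq with ⟨h1, -⟩ | ⟨h1, -⟩
        · exact huv h1.symm
        · exact hvw h1
      have hpair := card_cc_pair hvw huw hne1
      have hr : (fromEdgeSet
          (↑({s(v, w), s(u, w)} : Finset (Sym2 V)) : Set (Sym2 V))).Reachable u v := by
        have h1 : (fromEdgeSet
            (↑({s(v, w), s(u, w)} : Finset (Sym2 V)) : Set (Sym2 V))).Adj u w :=
          (fromEdgeSet_adj _).mpr ⟨by simp, huw⟩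
        have h2 : (fromEdgeSet
            (↑({s(v, w), s(u, w)} : Finset (Sym2 V)) : Set (Sym2 V))).Adj w v :=
          (fromEdgeSet_adj _).mpr ⟨by rw [Sym2.eq_swap]; simp, hvw.symm⟩
        exact h1.reachable.trans h2.reachable
      have hins := cc_insert_of_reach ({s(v, w), s(u, w)} : Finset (Sym2 V)) hr
      rw [show (insert s(u, v) ({s(v, w), s(u, w)} : Finset (Sym2 V)))
        = {s(u, v), s(v, w), s(u, w)} from rfl] at hins
      omega

end Stmt8

/-- For a finite set `Fs` of non-diagonal elements of `Sym2 V` over a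
finite vertex set `V`, `k(Fs) = |V| - 2` if and only if either `|Fs| = 2`, or `|Fs| = 3`
and the three edges of `Fs` form a triangle. -/
theorem components_eq_card_sub_two_iff {V : Type*} [Fintype V] [DecidableEq V]
    (Fs : Finset (Sym2 V))
    (hnd : ∀ e ∈ Fs, ¬ e.IsDiag) :
    (numComponents V (↑Fs : Set (Sym2 V)) : ℤ) = (Fintype.card V : ℤ) - 2 ↔
      (Fs.card = 2 ∨
        (Fs.card = 3 ∧ ∃ u v w : V, u ≠ v ∧ v ≠ w ∧ u ≠ w ∧
          Fs = {s(u, v), s(v, w), s(u, w)})) := by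
  exact Stmt8.final_helper Fs hnd
end
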